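/- For any complex E in the derived category of ℙ³ with Chern character (ch₀, ch₁, ch₂, ch₃) (intersected with appropriate powers of the hyperplane class), the equation Q_{α,β}(E) = α²Δ(E) + 4(ch₂^β)² - 6 ch₁^β ch₃^β = 0 is equivalent to ν_{α,β}(ch₀,ch₁,ch₂) = ν_{α,β}(ch₁, 2ch₂, 3ch₃), where ν_{α,β}(v₀,v₁,v₂) = (v₂ - β v₁ + (β²/2 - α²/2) v₀)/(v₁ - β v₀) and ch_i^β are the β-twisted Chern characters. -/
import Mathlib


/-- The tilt slope `ν_{α,β}` on a numerical class `(v₀,v₁,v₂)`. -/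
noncomputable def nuSlope (α β v₀ v₁ v₂ : ℝ) : ℝ :=
  (v₂ - β * v₁ + (β ^ 2 / 2 - α ^ 2 / 2) * v₀) / (v₁ - β * v₀)

/-- For a complex on `ℙ³` with Chern character `(ch₀, ch₁, ch₂, ch₃)`, the equation
`Q_{α,β} = α²Δ + 4(ch₂^β)² - 6 ch₁^β ch₃^β = 0` is equivalent to
`ν_{α,β}(ch₀,ch₁,ch₂) = ν_{α,β}(ch₁, 2ch₂, 3ch₃)` (away from the degenerate locus where
one of the two denominators vanishes); in particular `Q_{α,β} = 0` is a numerical wall. -/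
theorem stmt_19 (α β ch₀ ch₁ ch₂ ch₃ : ℝ)
    (hden₁ : ch₁ - β * ch₀ ≠ 0) (hden₂ : 2 * ch₂ - β * ch₁ ≠ 0) :
    α ^ 2 * (ch₁ ^ 2 - 2 * ch₀ * ch₂) + 4 * (ch₂ - β * ch₁ + β ^ 2 / 2 * ch₀) ^ 2
        - 6 * (ch₁ - β * ch₀) * (ch₃ - β * ch₂ + β ^ 2 / 2 * ch₁ - β ^ 3 / 6 * ch₀) = 0 ↔
      nuSlope α β ch₀ ch₁ ch₂ = nuSlope α β ch₁ (2 * ch₂) (3 * ch₃) := by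
  unfold nuSlope
  rw [div_eq_div_iff hden₁ hden₂]
  constructor <;> intro h <;> nlinarith [h, sq_nonneg β]
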